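/- Let p0, p1, p2 ∈ R_{2,1} have no common zeros on P^1 × P^1. Then any two k-linearly independent elements q1, q2 of the k-linear span of {p0, p1, p2} have no common non-constant factor: every r ∈ R dividing both q1 and q2 is a unit (a nonzero constant). In particular, any two such elements form a regular sequence in R. -/

import Mathlib

open MvPolynomial

noncomputable section

/-- The bigraded polynomial ring `R = k[x,y,z,w]`; variables `0,1,2,3` are `x,y,z,w`. -/
abbrev Rk (k : Type*) [Field k] := MvPolynomial (Fin 4) k

/-- The bigrading: `x, y` have degree `(1,0)`; `z, w` have degree `(0,1)`. -/
def bidegWt : Fin 4 → ℤ × ℤ := ![(1, 0), (1, 0), (0, 1), (0, 1)]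

/-- `p` is bihomogeneous of bidegree `(m, n)` (with the convention that only the zero
polynomial is bihomogeneous of a bidegree with a negative coordinate). -/
def Bihom {k : Type*} [Field k] (p : Rk k) (m n : ℤ) : Prop :=
  p.IsWeightedHomogeneous bidegWt (m, n)

/-- `p0, p1, p2` have no common zeros on `ℙ¹ × ℙ¹`. -/
def NoCommonZeros {k : Type*} [Field k] (p0 p1 p2 : Rk k) : Prop :=
  ∀ a b c d : k, (a, b) ≠ (0, 0) → (c, d) ≠ (0, 0) →
    eval ![a, b, c, d] p0 ≠ 0 ∨ eval ![a, b, c, d] p1 ≠ 0 ∨ eval ![a, b, c, d] p2 ≠ 0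

/-- The map `(A0, A1, A2) ↦ A0 p0 + A1 p1 + A2 p2`, as a `k`-linear map on `R³`. -/
def syzMapk {k : Type*} [Field k] (p : Fin 3 → Rk k) : (Fin 3 → Rk k) →ₗ[k] Rk k :=
  ∑ i : Fin 3, (LinearMap.mulRight k (p i)).comp (LinearMap.proj i)

/-- The bigraded piece `Syz(p)_{m,n}`: triples `(A0, A1, A2)` of bihomogeneous polynomials of
bidegree `(m-2, n-1)` with `A0 p0 + A1 p1 + A2 p2 = 0`, as a `k`-subspace of `R³`. -/
def SyzPiece {k : Type*} [Field k] (p : Fin 3 → Rk k) (m n : ℤ) :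
    Submodule k (Fin 3 → Rk k) :=
  (Submodule.pi Set.univ fun _ => weightedHomogeneousSubmodule k bidegWt (m - 2, n - 1)) ⊓
    LinearMap.ker (syzMapk p)

/-- The syzygy module `Syz(p)`, as an `R`-submodule of `R³`. -/
def Syz {k : Type*} [Field k] (p : Fin 3 → Rk k) : Submodule (Rk k) (Fin 3 → Rk k) :=
  LinearMap.ker (∑ i : Fin 3, (LinearMap.mulRight (Rk k) (p i)).comp (LinearMap.proj i))

/-- The Koszul submodule of `R³`: the `R`-submodule generated by the three Koszul syzygies
`(p1, −p0, 0)`, `(p2, 0, −p0)`, `(0, p2, −p1)`. -/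
def KoszulSub {k : Type*} [Field k] (p0 p1 p2 : Rk k) : Submodule (Rk k) (Fin 3 → Rk k) :=
  Submodule.span (Rk k) {![p1, -p0, 0], ![p2, 0, -p0], ![0, p2, -p1]}

/-- `p0, p1, p2 ∈ R_{2,1}` are generic: only finitely many points `[a0 : a1 : a2]` of `ℙ²(k)`
are such that `a0 p0 + a1 p1 + a2 p2` factors as `q · l` with `q ∈ R_{2,0}`, `l ∈ R_{0,1}`. -/
def BidegGeneric {k : Type*} [Field k] (p0 p1 p2 : Rk k) : Prop :=
  {P : Projectivization k (Fin 3 → k) |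
    ∃ q l : Rk k, Bihom q 2 0 ∧ Bihom l 0 1 ∧
      P.rep 0 • p0 + P.rep 1 • p1 + P.rep 2 • p2 = q * l}.Finite

namespace Stmt13

def w1 : Fin 4 → ℕ := ![1, 1, 0, 0]
def w2 : Fin 4 → ℕ := ![0, 0, 1, 1]

lemma weight_fin4 {M : Type*} [AddCommMonoid M] (w : Fin 4 → M) (d : Fin 4 →₀ ℕ) :
    Finsupp.weight w d = d 0 • w 0 + d 1 • w 1 + d 2 • w 2 + d 3 • w 3 := by
  rw [Finsupp.weight_apply, Finsupp.sum_fintype _ _ (by intro i; simp), Fin.sum_univ_four]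

lemma weight_w1 (d : Fin 4 →₀ ℕ) : Finsupp.weight w1 d = d 0 + d 1 := by
  rw [weight_fin4]; simp [w1]

lemma weight_w2 (d : Fin 4 →₀ ℕ) : Finsupp.weight w2 d = d 2 + d 3 := by
  rw [weight_fin4]; simp [w2]

lemma weight_bideg (d : Fin 4 →₀ ℕ) :
    Finsupp.weight bidegWt d = ((d 0 + d 1 : ℤ), (d 2 + d 3 : ℤ)) := by
  rw [weight_fin4]
  simp only [bidegWt]
  simp [Prod.ext_iff, Prod.smul_mk]

variable {k : Type*} [Field k]

lemma bihom_iff {p : Rk k} {m n : ℕ} :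
    Bihom p m n ↔ p.IsWeightedHomogeneous w1 m ∧ p.IsWeightedHomogeneous w2 n := by
  constructor
  · intro h
    refine ⟨fun d hd => ?_, fun d hd => ?_⟩
    · have := h hd
      rw [weight_bideg, Prod.ext_iff] at this; dsimp only at this
      rw [weight_w1]
      exact_mod_cast this.1
    · have := h hd
      rw [weight_bideg, Prod.ext_iff] at this; dsimp only at this
      rw [weight_w2]
      exact_mod_cast this.2
  · rintro ⟨h1, h2⟩ d hd
    have e1 := h1 hd; have e2 := h2 hd
    rw [weight_w1] at e1; rw [weight_w2] at e2
    rw [weight_bideg, Prod.ext_iff]; dsimp only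
    constructor
    · exact_mod_cast congrArg (Nat.cast : ℕ → ℤ) e1
    · exact_mod_cast congrArg (Nat.cast : ℕ → ℤ) e2

lemma bihom21 {p : Rk k} (h : Bihom p 2 1) :
    p.IsWeightedHomogeneous w1 2 ∧ p.IsWeightedHomogeneous w2 1 := by
  have h' : Bihom p ((2:ℕ):ℤ) ((1:ℕ):ℤ) := by exact_mod_cast h
  exact bihom_iff.mp h' 

lemma key_component (w : Fin 4 → ℕ) (φ ψ : MvPolynomial (Fin 4) k) (a b : ℕ)
    (hcond : ∀ u ∈ φ.support, ∀ v ∈ ψ.support,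
        Finsupp.weight w u + Finsupp.weight w v = a + b →
        Finsupp.weight w u = a ∧ Finsupp.weight w v = b) :
    weightedHomogeneousComponent w (a + b) (φ * ψ) =
      weightedHomogeneousComponent w a φ * weightedHomogeneousComponent w b ψ := by
  ext d
  rw [coeff_weightedHomogeneousComponent, coeff_mul, coeff_mul]
  split_ifs with h
  · refine Finset.sum_congr rfl fun uv huv => ?_
    rw [coeff_weightedHomogeneousComponent, coeff_weightedHomogeneousComponent]
    by_cases h1 : coeff uv.1 φ = 0
    · simp [h1]
    by_cases h2 : coeff uv.2 ψ = 0
    · simp [h2]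
    have hsum : Finsupp.weight w uv.1 + Finsupp.weight w uv.2 = a + b := by
      rw [← map_add, Finset.HasAntidiagonal.mem_antidiagonal.mp huv, h]
    obtain ⟨e1, e2⟩ := hcond _ (mem_support_iff.mpr h1) _ (mem_support_iff.mpr h2) hsum
    rw [if_pos e1, if_pos e2]
  · symm
    refine Finset.sum_eq_zero fun uv huv => ?_
    rw [coeff_weightedHomogeneousComponent, coeff_weightedHomogeneousComponent]
    split_ifs with e1 e2
    · exact absurd (by rw [← Finset.HasAntidiagonal.mem_antidiagonal.mp huv, map_add, e1, e2]) h
    all_goals ring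

lemma exists_homog_factor (w : Fin 4 → ℕ) {φ ψ : MvPolynomial (Fin 4) k} {n : ℕ}
    (hφ : φ ≠ 0) (hψ : ψ ≠ 0) (h : IsWeightedHomogeneous w (φ * ψ) n) :
    ∃ a b : ℕ, a + b = n ∧ IsWeightedHomogeneous w φ a ∧ IsWeightedHomogeneous w ψ b := by
  have hSφ : (φ.support.image (Finsupp.weight w)).Nonempty :=
    (support_nonempty.mpr hφ).image _
  have hSψ : (ψ.support.image (Finsupp.weight w)).Nonempty :=
    (support_nonempty.mpr hψ).image _
  set A := φ.support.image (Finsupp.weight w)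
  set B := ψ.support.image (Finsupp.weight w)
  have comp_ne : ∀ (c : ℕ), c ∈ A → weightedHomogeneousComponent w c φ ≠ 0 := by
    intro c hc
    obtain ⟨u, hu, hwu⟩ := Finset.mem_image.mp hc
    intro hzero
    have := congrArg (coeff u) hzero
    rw [coeff_weightedHomogeneousComponent, if_pos hwu, coeff_zero] at this
    exact mem_support_iff.mp hu this
  have comp_neB : ∀ (c : ℕ), c ∈ B → weightedHomogeneousComponent w c ψ ≠ 0 := by
    intro c hc
    obtain ⟨u, hu, hwu⟩ := Finset.mem_image.mp hc
    intro hzero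
    have := congrArg (coeff u) hzero
    rw [coeff_weightedHomogeneousComponent, if_pos hwu, coeff_zero] at this
    exact mem_support_iff.mp hu this
  have hsum : ∀ (a b : ℕ), a ∈ A → b ∈ B →
      (∀ u ∈ φ.support, ∀ v ∈ ψ.support,
        Finsupp.weight w u + Finsupp.weight w v = a + b →
        Finsupp.weight w u = a ∧ Finsupp.weight w v = b) → a + b = n := by
    intro a b ha hb hcond
    by_contra hne
    have hz := h.weightedHomogeneousComponent_ne (a + b) hne
    rw [key_component w φ ψ a b hcond] at hz
    exact mul_ne_zero (comp_ne a ha) (comp_neB b hb) hz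
  have hmax : A.max' hSφ + B.max' hSψ = n := by
    refine hsum _ _ (A.max'_mem hSφ) (B.max'_mem hSψ) fun u hu v hv hsum' => ?_
    have h1 : Finsupp.weight w u ≤ A.max' hSφ :=
      Finset.le_max' _ _ (Finset.mem_image_of_mem _ hu)
    have h2 : Finsupp.weight w v ≤ B.max' hSψ :=
      Finset.le_max' _ _ (Finset.mem_image_of_mem _ hv)
    omega
  have hmin : A.min' hSφ + B.min' hSψ = n := by
    refine hsum _ _ (A.min'_mem hSφ) (B.min'_mem hSψ) fun u hu v hv hsum' => ?_
    have h1 : A.min' hSφ ≤ Finsupp.weight w u :=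
      Finset.min'_le _ _ (Finset.mem_image_of_mem _ hu)
    have h2 : B.min' hSψ ≤ Finsupp.weight w v :=
      Finset.min'_le _ _ (Finset.mem_image_of_mem _ hv)
    omega
  have hAle : A.min' hSφ ≤ A.max' hSφ := Finset.min'_le _ _ (A.max'_mem hSφ)
  have hBle : B.min' hSψ ≤ B.max' hSψ := Finset.min'_le _ _ (B.max'_mem hSψ)
  refine ⟨A.max' hSφ, B.max' hSψ, hmax, ?_, ?_⟩
  · intro d hd
    have hmem : Finsupp.weight w d ∈ A := Finset.mem_image_of_mem _ (mem_support_iff.mpr hd)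
    have := Finset.le_max' _ _ hmem
    have := Finset.min'_le _ _ hmem
    omega
  · intro d hd
    have hmem : Finsupp.weight w d ∈ B := Finset.mem_image_of_mem _ (mem_support_iff.mpr hd)
    have := Finset.le_max' _ _ hmem
    have := Finset.min'_le _ _ hmem
    omega

lemma eval_scale {p : Rk k} {m n : ℕ} (h1 : IsWeightedHomogeneous w1 p m)
    (h2 : IsWeightedHomogeneous w2 p n) (l μ a b c d : k) :
    eval ![l*a, l*b, μ*c, μ*d] p = l^m * μ^n * eval ![a,b,c,d] p := by
  rw [eval_eq', eval_eq', Finset.mul_sum]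
  refine Finset.sum_congr rfl fun e he => ?_
  have e1 : e 0 + e 1 = m := by
    have := h1 (mem_support_iff.mp he); rwa [weight_w1] at this
  have e2 : e 2 + e 3 = n := by
    have := h2 (mem_support_iff.mp he); rwa [weight_w2] at this
  rw [Fin.prod_univ_four, Fin.prod_univ_four]
  simp only [Matrix.cons_val_zero, Matrix.cons_val_one, Matrix.head_cons,
    Matrix.cons_val_two, Matrix.tail_cons, Matrix.cons_val_three]
  rw [← e1, ← e2]
  ring

lemma eval_zw_linear {p : Rk k} (h2 : IsWeightedHomogeneous w2 p 1) (a b c d : k) :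
    eval ![a,b,c,d] p = c * eval ![a,b,1,0] p + d * eval ![a,b,0,1] p := by
  rw [eval_eq', eval_eq', eval_eq', Finset.mul_sum, Finset.mul_sum, ← Finset.sum_add_distrib]
  refine Finset.sum_congr rfl fun e he => ?_
  have e2 : e 2 + e 3 = 1 := by
    have := h2 (mem_support_iff.mp he); rwa [weight_w2] at this
  rw [Fin.prod_univ_four, Fin.prod_univ_four, Fin.prod_univ_four]
  simp only [Matrix.cons_val_zero, Matrix.cons_val_one, Matrix.head_cons,
    Matrix.cons_val_two, Matrix.tail_cons, Matrix.cons_val_three]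
  rcases (by omega : (e 2 = 1 ∧ e 3 = 0) ∨ (e 2 = 0 ∧ e 3 = 1)) with ⟨h2', h3⟩ | ⟨h2', h3⟩ <;>
    rw [h2', h3] <;> ring

lemma eval_zw_const {p : Rk k} (h2 : IsWeightedHomogeneous w2 p 0) (a b c d : k) :
    eval ![a,b,c,d] p = eval ![a,b,1,1] p := by
  rw [eval_eq', eval_eq']
  refine Finset.sum_congr rfl fun e he => ?_
  have e2 : e 2 + e 3 = 0 := by
    have := h2 (mem_support_iff.mp he); rwa [weight_w2] at this
  rw [Fin.prod_univ_four, Fin.prod_univ_four]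
  simp only [Matrix.cons_val_zero, Matrix.cons_val_one, Matrix.head_cons,
    Matrix.cons_val_two, Matrix.tail_cons, Matrix.cons_val_three]
  rw [(by omega : e 2 = 0), (by omega : e 3 = 0)]
  ring

lemma eval_aeval_poly (g : Fin 4 → Polynomial k) (p : Rk k) (t : k) :
    (aeval g p).eval t = eval (fun i => (g i).eval t) p := by
  induction p using MvPolynomial.induction_on with
  | C a => simp [Polynomial.eval_C]
  | add p q hp hq => simp [hp, hq]
  | mul_X p i hp => simp [hp]

lemma chart_eval (u v : k) (p : Rk k) (t : k) :
    (aeval ![Polynomial.X, 1, Polynomial.C u, Polynomial.C v] p).eval t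
      = eval ![t, 1, u, v] p := by
  rw [eval_aeval_poly]
  have : (fun i => Polynomial.eval t (![Polynomial.X, 1, Polynomial.C u, Polynomial.C v] i))
      = ![t, 1, u, v] := by
    funext i
    fin_cases i <;> simp
  rw [this]

lemma chart_eval' (u v : k) (p : Rk k) (t : k) :
    (aeval ![1, Polynomial.X, Polynomial.C u, Polynomial.C v] p).eval t
      = eval ![1, t, u, v] p := by
  rw [eval_aeval_poly]
  have : (fun i => Polynomial.eval t (![1, Polynomial.X, Polynomial.C u, Polynomial.C v] i))
      = ![1, t, u, v] := by
    funext i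
    fin_cases i <;> simp
  rw [this]

lemma root_of_homog_fun [IsAlgClosed k] {F : k → k → k} {D : ℕ} (hD : 1 ≤ D)
    (hF : ∀ l a b, F (l*a) (l*b) = l^D * F a b)
    (T S : Polynomial k) (hT : ∀ t, T.eval t = F t 1) (hS : ∀ t, S.eval t = F 1 t) :
    ∃ a b : k, ¬(a = 0 ∧ b = 0) ∧ F a b = 0 := by
  by_cases hdeg : T.degree ≤ 0
  · have hTC : T = Polynomial.C (T.coeff 0) := Polynomial.eq_C_of_degree_le_zero hdeg
    by_cases hc : T.coeff 0 = 0
    · refine ⟨0, 1, by simp, ?_⟩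
      rw [← hT 0, hTC]; simp [hc]
    · have hSeq : S = Polynomial.C (T.coeff 0) * Polynomial.X ^ D := by
        apply Polynomial.eq_of_infinite_eval_eq
        refine Set.Infinite.mono ?_ ((Set.finite_singleton (0:k)).infinite_compl)
        intro t ht
        have ht0 : t ≠ 0 := ht
        have : S.eval t = t^D * T.eval t⁻¹ := by
          rw [hS, hT]
          calc F 1 t = F (t * t⁻¹) (t * 1) := by
                rw [mul_inv_cancel₀ ht0, mul_one]
            _ = t^D * F t⁻¹ 1 := hF t t⁻¹ 1
        show Polynomial.eval t S = _
        have hev : Polynomial.eval t⁻¹ T = T.coeff 0 := by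
          conv_lhs => rw [hTC]
          rw [Polynomial.eval_C]
        rw [this, hev, Polynomial.eval_mul, Polynomial.eval_C, Polynomial.eval_pow,
          Polynomial.eval_X, mul_comm]
      refine ⟨1, 0, by simp, ?_⟩
      have h0 := hS 0
      rw [hSeq] at h0
      simp [zero_pow (by omega : D ≠ 0)] at h0
      exact h0.symm
  · obtain ⟨t, ht⟩ := IsAlgClosed.exists_root T (fun h => hdeg (le_of_eq h))
    exact ⟨t, 1, by simp, by rw [← hT t]; exact ht⟩

lemma exists_zw_zero {p : Rk k} (h2 : IsWeightedHomogeneous w2 p 1) (a b : k) :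
    ∃ c d : k, ¬(c = 0 ∧ d = 0) ∧ eval ![a,b,c,d] p = 0 := by
  by_cases hαβ : eval ![a,b,1,0] p = 0 ∧ eval ![a,b,0,1] p = 0
  · exact ⟨1, 0, by simp, by rw [eval_zw_linear h2, hαβ.1, hαβ.2]; ring⟩
  · refine ⟨eval ![a,b,0,1] p, -(eval ![a,b,1,0] p), ?_, ?_⟩
    · rintro ⟨hc, hd⟩
      exact hαβ ⟨neg_eq_zero.mp hd, hc⟩
    · rw [eval_zw_linear h2]; ring

lemma bezout [IsAlgClosed k] {r q : Rk k} {m n : ℕ}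
    (hr1 : IsWeightedHomogeneous w1 r m) (hr2 : IsWeightedHomogeneous w2 r n)
    (hq1 : IsWeightedHomogeneous w1 q 2) (hq2 : IsWeightedHomogeneous w2 q 1)
    (hn : n ≤ 1) (hmn : ¬(m = 0 ∧ n = 0)) :
    ∃ a b c d : k, ¬(a = 0 ∧ b = 0) ∧ ¬(c = 0 ∧ d = 0) ∧
      eval ![a,b,c,d] r = 0 ∧ eval ![a,b,c,d] q = 0 := by
  interval_cases n
  · -- n = 0
    have hm : 1 ≤ m := by omega
    have hF : ∀ l a b : k, eval ![l*a, l*b, (1:k), (1:k)] r = l^m * eval ![a,b,1,1] r := by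
      intro l a b
      have := eval_scale hr1 hr2 l 1 a b 1 1
      simpa using this
    obtain ⟨a, b, hab, hab0⟩ := root_of_homog_fun (k := k)
      (F := fun a b => eval ![a,b,1,1] r) hm (by intro l a b; exact hF l a b)
      (aeval ![Polynomial.X, 1, Polynomial.C 1, Polynomial.C 1] r)
      (aeval ![1, Polynomial.X, Polynomial.C 1, Polynomial.C 1] r)
      (fun t => chart_eval 1 1 r t) (fun t => chart_eval' 1 1 r t)
    obtain ⟨c, d, hcd, hq0⟩ := exists_zw_zero hq2 a b
    exact ⟨a, b, c, d, hab, hcd, by rw [eval_zw_const hr2, hab0], hq0⟩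
  · -- n = 1
    have hAr : ∀ l a b : k, eval ![l*a, l*b, (1:k), (0:k)] r = l^m * eval ![a,b,1,0] r := by
      intro l a b
      have := eval_scale hr1 hr2 l 1 a b 1 0
      simpa using this
    have hBr : ∀ l a b : k, eval ![l*a, l*b, (0:k), (1:k)] r = l^m * eval ![a,b,0,1] r := by
      intro l a b
      have := eval_scale hr1 hr2 l 1 a b 0 1
      simpa using this
    have hAq : ∀ l a b : k, eval ![l*a, l*b, (1:k), (0:k)] q = l^2 * eval ![a,b,1,0] q := by
      intro l a b
      have := eval_scale hq1 hq2 l 1 a b 1 0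
      simpa using this
    have hBq : ∀ l a b : k, eval ![l*a, l*b, (0:k), (1:k)] q = l^2 * eval ![a,b,0,1] q := by
      intro l a b
      have := eval_scale hq1 hq2 l 1 a b 0 1
      simpa using this
    obtain ⟨a, b, hab, hab0⟩ := root_of_homog_fun (k := k)
      (F := fun a b => eval ![a,b,1,0] r * eval ![a,b,0,1] q
        - eval ![a,b,0,1] r * eval ![a,b,1,0] q)
      (D := m + 2) (by omega)
      (by
        intro l a b
        rw [hAr, hBr, hAq, hBq]
        ring)
      ((aeval ![Polynomial.X, 1, Polynomial.C 1, Polynomial.C 0] r)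
          * (aeval ![Polynomial.X, 1, Polynomial.C 0, Polynomial.C 1] q)
        - (aeval ![Polynomial.X, 1, Polynomial.C 0, Polynomial.C 1] r)
          * (aeval ![Polynomial.X, 1, Polynomial.C 1, Polynomial.C 0] q))
      ((aeval ![1, Polynomial.X, Polynomial.C 1, Polynomial.C 0] r)
          * (aeval ![1, Polynomial.X, Polynomial.C 0, Polynomial.C 1] q)
        - (aeval ![1, Polynomial.X, Polynomial.C 0, Polynomial.C 1] r)
          * (aeval ![1, Polynomial.X, Polynomial.C 1, Polynomial.C 0] q))
      (by
        intro t
        rw [Polynomial.eval_sub, Polynomial.eval_mul, Polynomial.eval_mul,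
          chart_eval, chart_eval, chart_eval, chart_eval])
      (by
        intro t
        rw [Polynomial.eval_sub, Polynomial.eval_mul, Polynomial.eval_mul,
          chart_eval', chart_eval', chart_eval', chart_eval'])
    by_cases hAB : eval ![a,b,1,0] r = 0 ∧ eval ![a,b,0,1] r = 0
    · obtain ⟨c, d, hcd, hq0⟩ := exists_zw_zero hq2 a b
      refine ⟨a, b, c, d, hab, hcd, ?_, hq0⟩
      rw [eval_zw_linear hr2, hAB.1, hAB.2]; ring
    · refine ⟨a, b, eval ![a,b,0,1] r, -(eval ![a,b,1,0] r), hab, ?_, ?_, ?_⟩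
      · rintro ⟨hc, hd⟩
        exact hAB ⟨neg_eq_zero.mp hd, hc⟩
      · rw [eval_zw_linear hr2]; ring
      · rw [eval_zw_linear hq2]
        linear_combination -hab0

lemma eq_C_of_homog_zero {r : Rk k} (hr1 : IsWeightedHomogeneous w1 r 0)
    (hr2 : IsWeightedHomogeneous w2 r 0) : r = C (coeff 0 r) := by
  ext d
  rw [coeff_C]
  by_cases hd : d = 0
  · subst hd; simp
  · rw [if_neg (Ne.symm hd)]
    by_contra hc
    apply hd
    have e1 := hr1 hc; have e2 := hr2 hc
    rw [weight_w1] at e1; rw [weight_w2] at e2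
    ext i
    fin_cases i <;> simp <;> omega

lemma mem_span_triple {x p0 p1 p2 : Rk k} (h : x ∈ Submodule.span k {p0, p1, p2}) :
    ∃ a0 a1 a2 : k, x = a0 • p0 + a1 • p1 + a2 • p2 := by
  simp only [Submodule.mem_span_insert, Submodule.mem_span_singleton] at h
  obtain ⟨a0, y, ⟨a1, z, ⟨a2, rfl⟩, rfl⟩, rfl⟩ := h
  exact ⟨a0, a1, a2, by module⟩

lemma eval_smul_add3 (P : Fin 4 → k) (a0 a1 a2 : k) (p0 p1 p2 : Rk k) :
    eval P (a0 • p0 + a1 • p1 + a2 • p2)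
      = a0 * eval P p0 + a1 * eval P p1 + a2 * eval P p2 := by
  simp only [smul_eq_C_mul, map_add, map_mul, eval_C]

lemma part1 [IsAlgClosed k] {p0 p1 p2 : Rk k}
    (h0 : Bihom p0 2 1) (h1 : Bihom p1 2 1) (h2 : Bihom p2 2 1)
    (hncz : NoCommonZeros p0 p1 p2) {q1 q2 : Rk k}
    (hm1 : q1 ∈ Submodule.span k ({p0, p1, p2} : Set (Rk k)))
    (hm2 : q2 ∈ Submodule.span k ({p0, p1, p2} : Set (Rk k)))
    (hli : LinearIndependent k ![q1, q2]) :
    ∀ r : Rk k, r ∣ q1 → r ∣ q2 → IsUnit r := by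
  intro r hr1 hr2
  by_contra hrU
  -- q1 q2 are bihomogeneous of degree (2,1)
  have hspan : Submodule.span k ({p0, p1, p2} : Set (Rk k))
      ≤ weightedHomogeneousSubmodule k bidegWt ((2:ℤ), (1:ℤ)) := by
    rw [Submodule.span_le]
    rintro x hx
    simp only [Set.mem_insert_iff, Set.mem_singleton_iff] at hx
    rcases hx with rfl | rfl | rfl
    · exact h0
    · exact h1
    · exact h2
  have hq1B : Bihom q1 2 1 := hspan hm1
  have hq2B : Bihom q2 2 1 := hspan hm2
  obtain ⟨hq1w1, hq1w2⟩ := bihom21 hq1B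
  obtain ⟨hq2w1, hq2w2⟩ := bihom21 hq2B
  -- nonzero
  have hq1ne : q1 ≠ 0 := by
    have := hli.ne_zero 0
    simpa using this
  obtain ⟨s1, hs1eq⟩ := hr1
  have hrne : r ≠ 0 := by
    rintro rfl
    rw [zero_mul] at hs1eq
    exact hq1ne hs1eq
  have hs1ne : s1 ≠ 0 := by
    rintro rfl
    rw [mul_zero] at hs1eq
    exact hq1ne hs1eq
  -- r is bihomogeneous of degree (m, n) with n ≤ 1
  rw [hs1eq] at hq1w1 hq1w2
  obtain ⟨m, m', hmm', hrw1, hs1w1⟩ := exists_homog_factor w1 hrne hs1ne hq1w1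
  obtain ⟨n, n', hnn', hrw2, hs1w2⟩ := exists_homog_factor w2 hrne hs1ne hq1w2
  have hmn : ¬(m = 0 ∧ n = 0) := by
    rintro ⟨rfl, rfl⟩
    apply hrU
    rw [eq_C_of_homog_zero hrw1 hrw2]
    have hz : coeff 0 r ≠ 0 := by
      intro hz
      apply hrne
      rw [eq_C_of_homog_zero hrw1 hrw2, hz, map_zero]
    exact (isUnit_iff_ne_zero.mpr hz).map (C : k →+* Rk k)
  -- coefficient vectors
  obtain ⟨a0, a1, a2, ha⟩ := mem_span_triple hm1
  obtain ⟨b0, b1, b2, hb⟩ := mem_span_triple hm2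
  have hli' := LinearIndependent.pair_iff.mp hli
  -- cross product is nonzero
  have hcne : ¬(a1*b2 - a2*b1 = 0 ∧ a2*b0 - a0*b2 = 0 ∧ a0*b1 - a1*b0 = 0) := by
    rintro ⟨hc0, hc1, hc2⟩
    by_cases ha0 : a0 = 0 ∧ a1 = 0 ∧ a2 = 0
    · apply hq1ne
      rw [ha, ha0.1, ha0.2.1, ha0.2.2]
      simp
    · -- some aᵢ ≠ 0 : build a dependence relation, contradiction with hli
      have finish : ∀ s t : k, s • q1 + t • q2 = 0 → t ≠ 0 → False := by
        intro s t hrel ht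
        exact ht (hli' s t hrel).2
      rcases (by tauto : a0 ≠ 0 ∨ a1 ≠ 0 ∨ a2 ≠ 0) with hA | hA | hA
      · refine finish b0 (-a0) ?_ (neg_ne_zero.mpr hA)
        rw [ha, hb]
        have e1 : b0*a1 - a0*b1 = 0 := by linear_combination -hc2
        have e2 : b0*a2 - a0*b2 = 0 := by linear_combination hc1
        calc b0 • (a0 • p0 + a1 • p1 + a2 • p2) + (-a0) • (b0 • p0 + b1 • p1 + b2 • p2)
            = (b0*a1 - a0*b1) • p1 + (b0*a2 - a0*b2) • p2 := by module
          _ = 0 := by rw [e1, e2]; simp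
      · refine finish b1 (-a1) ?_ (neg_ne_zero.mpr hA)
        rw [ha, hb]
        have e1 : b1*a0 - a1*b0 = 0 := by linear_combination hc2
        have e2 : b1*a2 - a1*b2 = 0 := by linear_combination -hc0
        calc b1 • (a0 • p0 + a1 • p1 + a2 • p2) + (-a1) • (b0 • p0 + b1 • p1 + b2 • p2)
            = (b1*a0 - a1*b0) • p0 + (b1*a2 - a1*b2) • p2 := by module
          _ = 0 := by rw [e1, e2]; simp
      · refine finish b2 (-a2) ?_ (neg_ne_zero.mpr hA)
        rw [ha, hb]
        have e1 : b2*a0 - a2*b0 = 0 := by linear_combination -hc1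
        have e2 : b2*a1 - a2*b1 = 0 := by linear_combination hc0
        calc b2 • (a0 • p0 + a1 • p1 + a2 • p2) + (-a2) • (b0 • p0 + b1 • p1 + b2 • p2)
            = (b2*a0 - a2*b0) • p0 + (b2*a1 - a2*b1) • p1 := by module
          _ = 0 := by rw [e1, e2]; simp
  -- Now find a common zero of r and one of the pᵢ, and derive a contradiction.
  obtain ⟨s2, hs2eq⟩ := hr2
  have main : ∀ q3 : Rk k, Bihom q3 2 1 →
      ∃ a b c d : k, ¬(a = 0 ∧ b = 0) ∧ ¬(c = 0 ∧ d = 0) ∧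
        eval ![a,b,c,d] q1 = 0 ∧ eval ![a,b,c,d] q2 = 0 ∧ eval ![a,b,c,d] q3 = 0 := by
    intro q3 hq3
    obtain ⟨hq3w1, hq3w2⟩ := bihom21 hq3
    obtain ⟨a, b, c, d, hab, hcd, hrz, hq3z⟩ :=
      bezout hrw1 hrw2 hq3w1 hq3w2 (by omega) hmn
    refine ⟨a, b, c, d, hab, hcd, ?_, ?_, hq3z⟩
    · rw [hs1eq, map_mul, hrz, zero_mul]
    · rw [hs2eq, map_mul, hrz, zero_mul]
  have cross_ident : ∀ v0 v1 v2 : k,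
      a0*v0 + a1*v1 + a2*v2 = 0 → b0*v0 + b1*v1 + b2*v2 = 0 →
      v1*(a1*b2-a2*b1) = v0*(a2*b0-a0*b2)
        ∧ v2*(a1*b2-a2*b1) = v0*(a0*b1-a1*b0)
        ∧ v2*(a2*b0-a0*b2) = v1*(a0*b1-a1*b0) := by
    intro v0 v1 v2 hv1 hv2
    refine ⟨?_, ?_, ?_⟩
    · linear_combination b2*hv1 - a2*hv2
    · linear_combination a1*hv2 - b1*hv1
    · linear_combination b0*hv1 - a0*hv2
  have contra : ∀ a b c d : k, ¬(a = 0 ∧ b = 0) → ¬(c = 0 ∧ d = 0) →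
      eval ![a,b,c,d] q1 = 0 → eval ![a,b,c,d] q2 = 0 →
      eval ![a,b,c,d] p0 = 0 → eval ![a,b,c,d] p1 = 0 → eval ![a,b,c,d] p2 = 0 → False := by
    intro a b c d hab hcd _ _ h0' h1' h2'
    rcases hncz a b c d
        (fun h => hab ⟨congrArg Prod.fst h, congrArg Prod.snd h⟩)
        (fun h => hcd ⟨congrArg Prod.fst h, congrArg Prod.snd h⟩) with h | h | h
    · exact h h0'
    · exact h h1'
    · exact h h2'
  rcases (by tauto : a1*b2 - a2*b1 ≠ 0 ∨ a2*b0 - a0*b2 ≠ 0 ∨ a0*b1 - a1*b0 ≠ 0)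
      with hC | hC | hC
  · obtain ⟨a, b, c, d, hab, hcd, hz1, hz2, hz3⟩ := main p0 h0
    have hv1 : a0 * eval ![a,b,c,d] p0 + a1 * eval ![a,b,c,d] p1
        + a2 * eval ![a,b,c,d] p2 = 0 := by
      rw [← eval_smul_add3, ← ha, hz1]
    have hv2 : b0 * eval ![a,b,c,d] p0 + b1 * eval ![a,b,c,d] p1
        + b2 * eval ![a,b,c,d] p2 = 0 := by
      rw [← eval_smul_add3, ← hb, hz2]
    obtain ⟨i1, i2, i3⟩ := cross_ident _ _ _ hv1 hv2
    rw [hz3, zero_mul] at i1 i2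
    have e1 : eval ![a,b,c,d] p1 = 0 := by
      rcases mul_eq_zero.mp i1 with h | h
      · exact h
      · exact absurd h hC
    have e2 : eval ![a,b,c,d] p2 = 0 := by
      rcases mul_eq_zero.mp i2 with h | h
      · exact h
      · exact absurd h hC
    exact contra a b c d hab hcd hz1 hz2 hz3 e1 e2
  · obtain ⟨a, b, c, d, hab, hcd, hz1, hz2, hz3⟩ := main p1 h1
    have hv1 : a0 * eval ![a,b,c,d] p0 + a1 * eval ![a,b,c,d] p1
        + a2 * eval ![a,b,c,d] p2 = 0 := by
      rw [← eval_smul_add3, ← ha, hz1]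
    have hv2 : b0 * eval ![a,b,c,d] p0 + b1 * eval ![a,b,c,d] p1
        + b2 * eval ![a,b,c,d] p2 = 0 := by
      rw [← eval_smul_add3, ← hb, hz2]
    obtain ⟨i1, i2, i3⟩ := cross_ident _ _ _ hv1 hv2
    rw [hz3, zero_mul] at i1 i3
    have e0 : eval ![a,b,c,d] p0 = 0 := by
      rcases mul_eq_zero.mp i1.symm with h | h
      · exact h
      · exact absurd h hC
    have e2 : eval ![a,b,c,d] p2 = 0 := by
      rcases mul_eq_zero.mp i3 with h | h
      · exact h
      · exact absurd h hC
    exact contra a b c d hab hcd hz1 hz2 e0 hz3 e2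
  · obtain ⟨a, b, c, d, hab, hcd, hz1, hz2, hz3⟩ := main p2 h2
    have hv1 : a0 * eval ![a,b,c,d] p0 + a1 * eval ![a,b,c,d] p1
        + a2 * eval ![a,b,c,d] p2 = 0 := by
      rw [← eval_smul_add3, ← ha, hz1]
    have hv2 : b0 * eval ![a,b,c,d] p0 + b1 * eval ![a,b,c,d] p1
        + b2 * eval ![a,b,c,d] p2 = 0 := by
      rw [← eval_smul_add3, ← hb, hz2]
    obtain ⟨i1, i2, i3⟩ := cross_ident _ _ _ hv1 hv2
    rw [hz3, zero_mul] at i2 i3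
    have e0 : eval ![a,b,c,d] p0 = 0 := by
      rcases mul_eq_zero.mp i2.symm with h | h
      · exact h
      · exact absurd h hC
    have e1 : eval ![a,b,c,d] p1 = 0 := by
      rcases mul_eq_zero.mp i3.symm with h | h
      · exact h
      · exact absurd h hC
    exact contra a b c d hab hcd hz1 hz2 e0 e1 hz3

lemma bihom_of_mem_span {p0 p1 p2 x : Rk k}
    (h0 : Bihom p0 2 1) (h1 : Bihom p1 2 1) (h2 : Bihom p2 2 1)
    (hx : x ∈ Submodule.span k ({p0, p1, p2} : Set (Rk k))) : Bihom x 2 1 := by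
  have hspan : Submodule.span k ({p0, p1, p2} : Set (Rk k))
      ≤ weightedHomogeneousSubmodule k bidegWt ((2:ℤ), (1:ℤ)) := by
    rw [Submodule.span_le]
    rintro y hy
    simp only [Set.mem_insert_iff, Set.mem_singleton_iff] at hy
    rcases hy with rfl | rfl | rfl
    · exact h0
    · exact h1
    · exact h2
  exact hspan hx

lemma constCoeff_zero_of_bihom {p : Rk k} (h : Bihom p 2 1) : constantCoeff p = 0 := by
  have := h.coeff_eq_zero (0 : Fin 4 →₀ ℕ) ?_
  · simpa [constantCoeff_eq] using this
  · rw [weight_bideg]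
    simp [Prod.ext_iff]

open Pointwise in
lemma mem_smul_top_iff (r x : Rk k) :
    x ∈ r • (⊤ : Submodule (Rk k) (Rk k)) ↔ r ∣ x := by
  rw [← SetLike.mem_coe, Submodule.coe_pointwise_smul, Set.mem_smul_set]
  simp [dvd_def, eq_comm, smul_eq_mul]

lemma part2 {q1 q2 : Rk k} (hq1ne : q1 ≠ 0)
    (hrel : ∀ r : Rk k, r ∣ q1 → r ∣ q2 → IsUnit r)
    (hc1 : constantCoeff q1 = 0) (hc2 : constantCoeff q2 = 0) :
    RingTheory.Sequence.IsRegular (Rk k) [q1, q2] := by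
  have hrel' : IsRelPrime q1 q2 := fun z hz1 hz2 => hrel z hz1 hz2
  have hsmul1 : IsSMulRegular (Rk k) q1 := fun x y h =>
    mul_left_cancel₀ hq1ne (by simpa [smul_eq_mul] using h)
  have hsmul2 : IsSMulRegular (QuotSMulTop q1 (Rk k)) q2 := by
    intro x y hxy
    obtain ⟨u, rfl⟩ := Submodule.Quotient.mk_surjective _ x
    obtain ⟨v, rfl⟩ := Submodule.Quotient.mk_surjective _ y
    simp only at hxy
    rw [← Submodule.Quotient.mk_smul, ← Submodule.Quotient.mk_smul,
      Submodule.Quotient.eq] at hxy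
    rw [Submodule.Quotient.eq]
    have hd : q1 ∣ (u - v) * q2 := by
      have := (mem_smul_top_iff q1 _).mp hxy
      have h2 : q2 • u - q2 • v = (u - v) * q2 := by
        simp only [smul_eq_mul]; ring
      rwa [h2] at this
    have := hrel'.dvd_of_dvd_mul_right hd
    exact (mem_smul_top_iff q1 _).mpr this
  constructor
  · exact RingTheory.Sequence.IsWeaklyRegular.cons hsmul1
      (RingTheory.Sequence.IsWeaklyRegular.cons hsmul2
        (RingTheory.Sequence.IsWeaklyRegular.nil _ _))
  · -- ⊤ ≠ ofList [q1, q2] • ⊤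
    intro htop
    have hIle : Ideal.ofList [q1, q2] ≤ RingHom.ker (constantCoeff : Rk k →+* k) := by
      apply Ideal.span_le.mpr
      rintro x hx
      simp only [Set.mem_setOf_eq, List.mem_cons, List.mem_singleton,
        List.not_mem_nil, or_false] at hx
      rcases hx with rfl | rfl
      · exact hc1
      · exact hc2
    have hsmulle : Ideal.ofList [q1, q2] • (⊤ : Submodule (Rk k) (Rk k))
        ≤ Ideal.ofList [q1, q2] := by
      refine Submodule.smul_le.mpr fun r hr n _ => ?_
      rw [smul_eq_mul]
      exact Ideal.mul_mem_right _ _ hr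
    have h1 : (1 : Rk k) ∈ Ideal.ofList [q1, q2] • (⊤ : Submodule (Rk k) (Rk k)) := by
      rw [← htop]; trivial
    have := hIle (hsmulle h1)
    rw [RingHom.mem_ker, map_one] at this
    exact one_ne_zero this

end Stmt13


/-- Any two `k`-linearly independent elements of the span of
`{p0, p1, p2}` have no common non-constant factor, and form a regular sequence in `R`. -/
theorem statement13 {k : Type*} [Field k] [IsAlgClosed k] (p0 p1 p2 : Rk k)
    (h0 : Bihom p0 2 1) (h1 : Bihom p1 2 1) (h2 : Bihom p2 2 1)
    (hncz : NoCommonZeros p0 p1 p2) :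
    ∀ q1 q2 : Rk k,
      q1 ∈ Submodule.span k ({p0, p1, p2} : Set (Rk k)) →
      q2 ∈ Submodule.span k ({p0, p1, p2} : Set (Rk k)) →
      LinearIndependent k ![q1, q2] →
        (∀ r : Rk k, r ∣ q1 → r ∣ q2 → IsUnit r) ∧
        RingTheory.Sequence.IsRegular (Rk k) [q1, q2] := by
  intro q1 q2 hm1 hm2 hli
  have hpart1 := Stmt13.part1 h0 h1 h2 hncz hm1 hm2 hli
  refine ⟨hpart1, ?_⟩
  have hq1ne : q1 ≠ 0 := by simpa using hli.ne_zero 0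
  exact Stmt13.part2 hq1ne hpart1
    (Stmt13.constCoeff_zero_of_bihom (Stmt13.bihom_of_mem_span h0 h1 h2 hm1))
    (Stmt13.constCoeff_zero_of_bihom (Stmt13.bihom_of_mem_span h0 h1 h2 hm2))
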